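/- Let k be a commutative ring in which d! = 0 (and d! is not invertible). In the graded Hopf algebra H^*(ΩΣℂP^d;k) = TC(H^+(ℂP^d;k))^∨-dual description, the degree-2 generator x_2 satisfies x_2^d ≠ 0, while in H^*(Ω(S^3 ∨ … ∨ S^{2d+1});k), the tensor coalgebra with shuffle product on generators of degrees 2,4,…,2d, the corresponding degree-2 generator satisfies x_2^d = d!·[x_2|…|x_2] = 0. Consequently these two graded algebras are not isomorphic when d! = 0 in k. -/

import Mathlib

/-!
STATEMENT 18.  Let `k` be a (nontrivial) commutative ring with `d! = 0`.
The loop space cohomologies `H^*(ΩΣℂP^d;k)` and `H^*(Ω(S³ ∨ … ∨ S^{2d+1});k)`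
are both modeled on the tensor coalgebra on generators `x₂, x₄, …, x_{2d}`
(free module on words in `Fin d`, the letter `i` having degree `2(i+1)`),
with product obtained by tensorization: for `ℂP^d` this is the step-by-step
path product associated with the cup product `x_{2i}·x_{2j} = x_{2(i+j)}`
(truncated above `2d`), and for the wedge of spheres the cup product is
trivial, giving the shuffle product.  Then `x₂^d ≠ 0` in the first algebra,
while in the second `x₂^d = d!·[x₂|…|x₂] = 0`; consequently the two graded
algebras are not isomorphic.  (All degrees are even, so no signs occur.)
-/

def sgn (m : ℤ) : ℤ := if Even m then 1 else -1

def degW {B : Type*} (deg : B → ℤ) (l : List B) : ℤ := (l.map deg).sum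

noncomputable def pathProd (k : Type*) {B : Type*} [CommRing k] (deg : B → ℤ)
    (m : B → B → (B →₀ k)) : List B → List B → (List B →₀ k)
  | [], l => Finsupp.single l 1
  | a :: x, [] => Finsupp.single (a :: x) 1
  | a :: x, b :: y =>
      (pathProd k deg m x (b :: y)).mapDomain (a :: ·)
      + sgn (deg b * (deg a + degW deg x)) •
          (pathProd k deg m (a :: x) y).mapDomain (b :: ·)
      + sgn (deg b * degW deg x) •
          ((m a b).sum fun c coef =>
            coef • (pathProd k deg m x y).mapDomain (c :: ·))
  termination_by x y => x.length + y.length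

/-- Bilinear extension of a product defined on words. -/
noncomputable def bilF {k B : Type*} [CommRing k]
    (μ : List B → List B → (List B →₀ k)) (f g : List B →₀ k) : List B →₀ k :=
  f.sum fun l c => g.sum fun l' c' => (c * c') • μ l l'

/-- `n`-th power of `x` for the product `μ` (with `x⁰ = []`, the unit). -/
noncomputable def powF {k B : Type*} [CommRing k]
    (μ : List B → List B → (List B →₀ k)) (x : List B →₀ k) : ℕ → (List B →₀ k)
  | 0 => Finsupp.single [] 1
  | n + 1 => bilF μ (powF μ x n) x

/-- The degree of the generator `x_{2(i+1)}`. -/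
def degCP (d : ℕ) (i : Fin d) : ℤ := 2 * ((i : ℕ) + 1)

/-- The cup product of `H^+(ℂP^d)`: `x_{2(i+1)}·x_{2(j+1)} = x_{2(i+j+2)}`,
truncated when the degree exceeds `2d`. -/
noncomputable def cupCP (k : Type*) [CommRing k] (d : ℕ) (i j : Fin d) : Fin d →₀ k :=
  if h : (i : ℕ) + (j : ℕ) + 2 ≤ d then
    Finsupp.single ⟨(i : ℕ) + (j : ℕ) + 1, by omega⟩ 1
  else 0

/-- Homogeneous component of (total) degree `n` of the tensor coalgebra. -/
noncomputable def homogCP (k : Type*) [CommRing k] (d : ℕ) (n : ℤ) : Submodule k (List (Fin d) →₀ k) :=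
  Submodule.span k {f | ∃ l : List (Fin d), degW (degCP d) l = n ∧ f = Finsupp.single l 1}

section A
variable {k B : Type*} [CommRing k] (deg : B → ℤ) (m : B → B → (B →₀ k))

lemma sgn_of_even {n : ℤ} (h : Even n) : sgn n = 1 := if_pos h

lemma mapDomain_cons_apply_nil (a : B) (F : List B →₀ k) :
    (F.mapDomain (a :: ·)) [] = 0 := by
  apply Finsupp.mapDomain_notin_range
  rintro ⟨u, hu⟩; simp at hu

lemma mapDomain_cons_apply_cons [DecidableEq B] (a c : B) (F : List B →₀ k) (w : List B) :
    (F.mapDomain (a :: ·)) (c :: w) = if c = a then F w else 0 := by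
  split
  · subst_vars
    exact Finsupp.mapDomain_apply (fun x y h => by simpa using h) F w
  · apply Finsupp.mapDomain_notin_range
    rintro ⟨u, hu⟩; simp at hu; tauto

lemma fin_sum_ind [DecidableEq B] (f : B →₀ k) (c : B) :
    (f.sum fun a b => if a = c then b else 0) = f c := by
  classical
  rw [Finsupp.sum, Finset.sum_ite_eq' f.support c (fun a => f a)]
  split
  · rfl
  · exact (Finsupp.notMem_support_iff.mp (by assumption)).symm

lemma bilF_single_single (μ : List B → List B → (List B →₀ k)) (l l' : List B) (c c' : k) :
    bilF μ (Finsupp.single l c) (Finsupp.single l' c') = (c * c') • μ l l' := by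
  unfold bilF
  rw [Finsupp.sum_single_index (by simp), Finsupp.sum_single_index (by simp)]

lemma bilF_single_right_apply (μ : List B → List B → (List B →₀ k)) (G : List B →₀ k)
    (t : List B) (w : List B) :
    (bilF μ G (Finsupp.single t (1:k))) w = G.sum fun l c => c * (μ l t) w := by
  unfold bilF
  rw [Finsupp.sum_apply]
  apply Finsupp.sum_congr
  intro l _
  rw [Finsupp.sum_single_index (by simp)]
  simp

lemma pathProd_nil_left (l : List B) : pathProd k deg m [] l = Finsupp.single l 1 := by
  rw [pathProd]

lemma pathProd_cons_nil (a : B) (x : List B) :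
    pathProd k deg m (a :: x) [] = Finsupp.single (a :: x) 1 := by
  rw [pathProd]

lemma pathProd_cons_cons (a b : B) (x y : List B) : pathProd k deg m (a::x) (b::y) =
      (pathProd k deg m x (b :: y)).mapDomain (a :: ·)
      + sgn (deg b * (deg a + degW deg x)) •
          (pathProd k deg m (a :: x) y).mapDomain (b :: ·)
      + sgn (deg b * degW deg x) •
          ((m a b).sum fun c coef =>
            coef • (pathProd k deg m x y).mapDomain (c :: ·)) := by
  rw [pathProd]

lemma pathProd_apply_nil (x y : List B) (h : x ≠ [] ∨ y ≠ []) :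
    (pathProd k deg m x y) [] = 0 := by
  match x, y with
  | [], [] => simp at h
  | [], b :: y => rw [pathProd]; exact Finsupp.single_eq_of_ne (by simp)
  | a :: x, [] => rw [pathProd]; exact Finsupp.single_eq_of_ne (by simp)
  | a :: x, b :: y =>
    rw [pathProd]
    simp only [Finsupp.add_apply, Finsupp.smul_apply, mapDomain_cons_apply_nil,
      Finsupp.sum_apply]
    simp [mapDomain_cons_apply_nil]
end A

section B
variable {k : Type*} [CommRing k] {d : ℕ} (hd : 1 ≤ d)

lemma sgn_degCP (b : Fin d) (t : ℤ) : sgn (degCP d b * t) = 1 :=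
  sgn_of_even (Even.mul_right ⟨((b : ℕ) : ℤ) + 1, by unfold degCP; push_cast; ring⟩ t)

lemma shuffle_step (n : ℕ) :
    pathProd k (degCP d) (fun _ _ => (0 : Fin d →₀ k))
      (List.replicate n ⟨0, hd⟩) [⟨0, hd⟩]
    = Finsupp.single (List.replicate (n+1) ⟨0, hd⟩) ((n+1 : ℕ) : k) := by
  induction n with
  | zero => simp [List.replicate, pathProd_nil_left]
  | succ n ih =>
    rw [List.replicate_succ, pathProd_cons_cons, ih, pathProd_cons_nil]
    simp only [Finsupp.sum_zero_index, smul_zero, add_zero, sgn_degCP, one_smul,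
      Finsupp.mapDomain_single, List.replicate_succ]
    rw [← Finsupp.single_add]
    congr 1
    push_cast
    ring

lemma shuffle_pow (c : k) (n : ℕ) :
    powF (pathProd k (degCP d) (fun _ _ => 0)) (Finsupp.single [⟨0, hd⟩] c) n
    = Finsupp.single (List.replicate n ⟨0, hd⟩) ((n.factorial : k) * c ^ n) := by
  induction n with
  | zero => simp [powF]
  | succ n ih =>
    rw [powF, ih, bilF_single_single, shuffle_step hd, Finsupp.smul_single]
    congr 1
    push_cast [Nat.factorial_succ, smul_eq_mul]
    ring

end B

section C
variable {k : Type*} [CommRing k] {d : ℕ} (hd : 1 ≤ d)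

lemma pathProd_cup_long (a b u c : Fin d) (t : List (Fin d)) :
    (pathProd k (degCP d) (cupCP k d) (a :: b :: t) [u]) [c] = 0 := by
  rw [pathProd_cons_cons, pathProd_cons_nil, pathProd_cons_nil]
  simp only [Finsupp.add_apply, Finsupp.smul_apply, Finsupp.sum_apply,
    mapDomain_cons_apply_cons, Finsupp.mapDomain_single]
  rw [pathProd_apply_nil _ _ _ _ (Or.inl (by simp))]
  simp [Finsupp.single_apply, Finsupp.single_eq_of_ne]

lemma pathProd_cup_one (a u c : Fin d) :
    (pathProd k (degCP d) (cupCP k d) [a] [u]) [c] = (cupCP k d a u) c := by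
  rw [pathProd_cons_cons, pathProd_nil_left, pathProd_cons_nil, pathProd_nil_left]
  simp only [Finsupp.add_apply, Finsupp.smul_apply, Finsupp.sum_apply,
    Finsupp.mapDomain_single, sgn_degCP, one_smul]
  rw [Finsupp.single_eq_of_ne (by simp), Finsupp.single_eq_of_ne (by simp)]
  simp only [Finsupp.smul_apply, Finsupp.single_apply, smul_eq_mul, mul_ite, mul_one, mul_zero,
    List.cons.injEq, and_true]
  rw [show (fun (c' : Fin d) (coef : k) => if c' = c then coef else 0)
      = fun c' coef => if c' = c then coef else 0 from rfl]
  rw [fin_sum_ind]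
  ring

end C

section D
variable {k : Type*} [CommRing k] {d : ℕ} (hd : 1 ≤ d)

lemma cup_pow_coef : ∀ (n : ℕ) (h : n + 1 ≤ d),
    (powF (pathProd k (degCP d) (cupCP k d)) (Finsupp.single [⟨0, hd⟩] 1) (n+1))
        [(⟨n, by omega⟩ : Fin d)] = 1 ∧
    (powF (pathProd k (degCP d) (cupCP k d)) (Finsupp.single [⟨0, hd⟩] 1) (n+1)) [] = 0 := by
  intro n
  induction n with
  | zero =>
    intro h
    rw [powF, powF, bilF_single_single, pathProd_nil_left, one_mul, one_smul]
    constructor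
    · simp [Finsupp.single_apply]
    · exact Finsupp.single_eq_of_ne (by simp)
  | succ n ih =>
    intro h
    have ih' := ih (by omega)
    constructor
    · rw [powF, bilF_single_right_apply,
        Finsupp.sum_congr (g2 := fun l c => if l = [(⟨n, by omega⟩ : Fin d)] then c else 0) ?_,
        fin_sum_ind]
      · exact ih'.1
      · intro l _
        match l with
        | [] =>
          rw [pathProd_nil_left]
          simp [Finsupp.single_apply, Fin.ext_iff]
        | [a] =>
          rw [pathProd_cup_one]
          simp only [cupCP]
          by_cases ha : (a : ℕ) = n
          · rw [dif_pos (by omega)]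
            simp [Finsupp.single_apply, Fin.ext_iff, ha]
          · have : ¬ ([a] = [(⟨n, by omega⟩ : Fin d)]) := by
              simp [Fin.ext_iff]; omega
            rw [if_neg this]
            split_ifs with h2
            · rw [Finsupp.single_eq_of_ne (by simp [Fin.ext_iff]; omega)]; ring
            · simp
        | a :: b :: t =>
          rw [pathProd_cup_long]
          simp [Fin.ext_iff]
    · rw [powF, bilF_single_right_apply,
        Finsupp.sum_congr (g2 := fun _ _ => (0 : k)) ?_, Finsupp.sum, Finset.sum_const_zero]
      intro l _
      rw [pathProd_apply_nil _ _ _ _ (Or.inr (by simp))]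
      ring

end D

section E
variable {k : Type*} [CommRing k] {d : ℕ} (hd : 1 ≤ d)

lemma degW_nonneg : ∀ l : List (Fin d), 0 ≤ degW (degCP d) l
  | [] => le_refl 0
  | a :: t => by
    have h1 : (0:ℤ) ≤ degCP d a := by unfold degCP; positivity
    have h2 := degW_nonneg t
    simp only [degW, List.map_cons, List.sum_cons]
    have : degW (degCP d) t = (t.map (degCP d)).sum := rfl
    omega

lemma deg_two_word : ∀ l : List (Fin d), degW (degCP d) l = 2 → l = [⟨0, hd⟩]
  | [], h => by simp [degW] at h
  | [a], h => by
    simp only [degW, List.map_cons, List.map_nil, List.sum_cons, List.sum_nil, add_zero,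
      degCP] at h
    have : (a : ℕ) = 0 := by omega
    simp [Fin.ext_iff, this]
  | a :: b :: t, h => by
    exfalso
    have h1 : (2:ℤ) ≤ degCP d a := by unfold degCP; omega
    have h2 : (2:ℤ) ≤ degCP d b := by unfold degCP; omega
    have h3 := degW_nonneg t
    simp only [degW, List.map_cons, List.sum_cons] at h
    have : degW (degCP d) t = (t.map (degCP d)).sum := rfl
    omega

end E

theorem CPd_vs_wedge_of_spheres (k : Type*) [CommRing k] [Nontrivial k]
    (d : ℕ) (hd : 1 ≤ d) (hfac : ((Nat.factorial d : ℕ) : k) = 0) :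
    -- `x₂^d ≠ 0` in `H^*(ΩΣℂP^d)`
    powF (pathProd k (degCP d) (cupCP k d)) (Finsupp.single [⟨0, hd⟩] 1) d ≠ 0 ∧
    -- `x₂^d = d!·[x₂|…|x₂] = 0` in `H^*(Ω(S³ ∨ … ∨ S^{2d+1}))`
    (powF (pathProd k (degCP d) (fun _ _ => 0)) (Finsupp.single [⟨0, hd⟩] 1) d
        = ((Nat.factorial d : ℕ) : k) •
            Finsupp.single (List.replicate d ⟨0, hd⟩) 1 ∧
      powF (pathProd k (degCP d) (fun _ _ => 0)) (Finsupp.single [⟨0, hd⟩] 1) d = 0) ∧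
    -- consequently there is no isomorphism of graded algebras between them
    ¬ ∃ e : (List (Fin d) →₀ k) ≃ₗ[k] (List (Fin d) →₀ k),
        (∀ f g, e (bilF (pathProd k (degCP d) (cupCP k d)) f g)
            = bilF (pathProd k (degCP d) (fun _ _ => 0)) (e f) (e g)) ∧
        e (Finsupp.single [] 1) = Finsupp.single [] 1 ∧
        (∀ (n : ℤ) (f), f ∈ homogCP k d n → e f ∈ homogCP k d n) := by
  have key1 : powF (pathProd k (degCP d) (cupCP k d)) (Finsupp.single [⟨0, hd⟩] 1) d ≠ 0 := by
    obtain ⟨n, rfl⟩ : ∃ n, d = n + 1 := ⟨d - 1, by omega⟩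
    have h1 := (cup_pow_coef (k := k) hd n (le_refl (n+1))).1
    intro h0
    rw [h0] at h1
    simp at h1
  have key2 : powF (pathProd k (degCP d) (fun _ _ => 0)) (Finsupp.single [⟨0, hd⟩] 1) d
      = Finsupp.single (List.replicate d ⟨0, hd⟩) ((d.factorial : k)) := by
    rw [shuffle_pow hd 1 d]
    simp
  refine ⟨key1, ⟨?_, ?_⟩, ?_⟩
  · rw [key2, Finsupp.smul_single']
    simp
  · rw [key2, hfac, Finsupp.single_zero]
  · rintro ⟨e, hmul, hunit, hgr⟩
    have hx2 : Finsupp.single [⟨0, hd⟩] (1:k) ∈ homogCP k d 2 :=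
      Submodule.subset_span ⟨[⟨0, hd⟩], by simp [degW, degCP], rfl⟩
    have hex := hgr 2 _ hx2
    have hspan : homogCP k d 2 ≤ Submodule.span k {Finsupp.single [⟨0, hd⟩] (1:k)} := by
      apply Submodule.span_le.mpr
      rintro f ⟨l, hl, rfl⟩
      rw [deg_two_word hd l hl]
      exact Submodule.subset_span rfl
    obtain ⟨c, hc⟩ := Submodule.mem_span_singleton.mp (hspan hex)
    have hpow : ∀ m : ℕ, e (powF (pathProd k (degCP d) (cupCP k d)) (Finsupp.single [⟨0, hd⟩] 1) m)
        = powF (pathProd k (degCP d) (fun _ _ => 0)) (e (Finsupp.single [⟨0, hd⟩] 1)) m := by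
      intro m
      induction m with
      | zero => simpa [powF] using hunit
      | succ m ihm => rw [powF, hmul, ihm, powF]
    have hzero : e (powF (pathProd k (degCP d) (cupCP k d)) (Finsupp.single [⟨0, hd⟩] 1) d) = 0 := by
      rw [hpow d, ← hc, Finsupp.smul_single', mul_one, shuffle_pow hd c d, hfac]
      simp
    exact key1 ((LinearEquiv.map_eq_zero_iff e).mp hzero)
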